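/- Let (p_n)_{n≥1} be a sequence of positive real numbers that is either non-decreasing or non-increasing, and set P_N := Σ_{n=1}^N p_n. Assume P_N → ∞ and p_N / P_N → 0 as N → ∞. Then for every ε > 0 there exists δ > 0 with the following property: for every function f : ℕ → ℂ with |f(n)| ≤ 1 for all n, such that for every h ∈ ℕ (h ≥ 1) the limit A(h) := lim_{N→∞} (1/P_N) Σ_{n=1}^N p_n · f(n+h) · conj(f(n)) exists, one has the implication: if limsup_{H→∞} |(1/H) Σ_{h=1}^H A(h)| ≤ δ, then limsup_{N→∞} |(1/P_N) Σ_{n=1}^N p_n · f(n)| ≤ ε. (Theorem A.2 of the paper, a weighted van der Corput lemma.) -/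

import Mathlib

open Filter Topology


noncomputable def Complex.abs : AbsoluteValue ℂ ℝ :=
  IsAbsoluteValue.toAbsoluteValue (norm : ℂ → ℝ)

lemma Complex.norm_eq_abs (z : ℂ) : ‖z‖ = Complex.abs z := rfl

lemma Complex.abs_ofReal (r : ℝ) : Complex.abs (r : ℂ) = |r| := Complex.norm_real r

lemma Complex.abs_conj (z : ℂ) : Complex.abs ((starRingEnd ℂ) z) = Complex.abs z :=
  Complex.norm_conj z

lemma Complex.abs_natCast (n : ℕ) : Complex.abs (n : ℂ) = n := Complex.norm_natCast n

lemma Complex.sq_abs (z : ℂ) : Complex.abs z ^ 2 = Complex.normSq z := Complex.sq_norm z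

noncomputable def PP (p : ℕ → ℝ) (N : ℕ) : ℝ := ∑ n ∈ Finset.Icc 1 N, p n
noncomputable def Avg (p : ℕ → ℝ) (g : ℕ → ℂ) (N : ℕ) : ℂ :=
  (1 / (PP p N : ℂ)) * ∑ n ∈ Finset.Icc 1 N, (p n : ℂ) * g n

lemma PP_pos {p : ℕ → ℝ} (hp : ∀ n, 0 < p n) {N : ℕ} (hN : 1 ≤ N) : 0 < PP p N := by
  apply Finset.sum_pos (fun i _ => hp i)
  exact ⟨1, by simp [hN]⟩

lemma Avg_const_mul (p : ℕ → ℝ) (a : ℂ) (g : ℕ → ℂ) (N : ℕ) :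
    Avg p (fun n => a * g n) N = a * Avg p g N := by
  unfold Avg
  rw [show a * ((1 / (PP p N : ℂ)) * ∑ n ∈ Finset.Icc 1 N, (p n : ℂ) * g n) =
    (1 / (PP p N : ℂ)) * (a * ∑ n ∈ Finset.Icc 1 N, (p n : ℂ) * g n) by ring]
  congr 1
  rw [Finset.mul_sum]
  apply Finset.sum_congr rfl
  intro n _; ring

lemma Avg_sum (p : ℕ → ℝ) {ι : Type*} (t : Finset ι) (g : ι → ℕ → ℂ) (N : ℕ) :
    Avg p (fun n => ∑ i ∈ t, g i n) N = ∑ i ∈ t, Avg p (g i) N := by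
  unfold Avg
  rw [← Finset.mul_sum]
  congr 1
  simp_rw [Finset.mul_sum]
  exact Finset.sum_comm

lemma abs_sum_le {p : ℕ → ℝ} (hp : ∀ n, 0 < p n) (g : ℕ → ℂ) (hg : ∀ n, Complex.abs (g n) ≤ 1)
    (N : ℕ) : Complex.abs (∑ n ∈ Finset.Icc 1 N, (p n : ℂ) * g n) ≤ PP p N := by
  calc Complex.abs (∑ n ∈ Finset.Icc 1 N, (p n : ℂ) * g n)
      ≤ ∑ n ∈ Finset.Icc 1 N, Complex.abs ((p n : ℂ) * g n) :=
        AbsoluteValue.sum_le _ _ _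
    _ ≤ ∑ n ∈ Finset.Icc 1 N, p n := by
        apply Finset.sum_le_sum
        intro i _
        rw [map_mul, Complex.abs_ofReal, abs_of_pos (hp i)]
        nlinarith [hg i, Complex.abs.nonneg (g i), (hp i)]
    _ = PP p N := rfl

lemma Avg_abs_le {p : ℕ → ℝ} (hp : ∀ n, 0 < p n) (g : ℕ → ℂ) (hg : ∀ n, Complex.abs (g n) ≤ 1)
    {N : ℕ} (hN : 1 ≤ N) : Complex.abs (Avg p g N) ≤ 1 := by
  have hP := PP_pos hp hN
  rw [Avg, map_mul]
  have h1 : Complex.abs (1 / (PP p N : ℂ)) = 1 / PP p N := by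
    rw [map_div₀, map_one, Complex.abs_ofReal, abs_of_pos hP]
  rw [h1, div_mul_eq_mul_div, one_mul, div_le_one hP]
  exact abs_sum_le hp g hg N

lemma tele_bound {p : ℕ → ℝ} (hp : ∀ n, 0 < p n) (hmono : Monotone p ∨ Antitone p) (N : ℕ)
    (hN : 1 ≤ N) :
    ∑ m ∈ Finset.Icc 2 N, |p (m - 1) - p m| ≤ max (p 1) (p N) := by
  have hre : ∀ q : ℕ → ℝ, ∑ m ∈ Finset.Icc 2 N, q m = ∑ i ∈ Finset.range (N - 1), q (2 + i) := by
    intro q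
    rw [show Finset.Icc 2 N = Finset.Ico 2 (N+1) by rw [Finset.Ico_add_one_right_eq_Icc],
      Finset.sum_Ico_eq_sum_range, show N + 1 - 2 = N - 1 by omega]
  rcases hmono with hm | hm
  · have h0 : ∀ m ∈ Finset.Icc 2 N, |p (m-1) - p m| = p m - p (m-1) := by
      intro m hm'
      rw [abs_sub_comm, abs_of_nonneg (by simp only [sub_nonneg]; exact hm (by omega))]
    rw [Finset.sum_congr rfl h0, hre (fun m => p m - p (m-1))]
    have h1 : ∑ i ∈ Finset.range (N-1), (fun m => p m - p (m-1)) (2 + i) =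
        ∑ i ∈ Finset.range (N-1), ((fun j => p (j+1)) (i+1) - (fun j => p (j+1)) i) := by
      apply Finset.sum_congr rfl; intro i _
      simp only
      rw [show 2 + i = i + 1 + 1 by omega, show i + 1 + 1 - 1 = i + 1 by omega]
    rw [h1, Finset.sum_range_sub (fun j => p (j+1)) (N-1)]
    simp only [show N - 1 + 1 = N from by omega, Nat.zero_add]
    have := (hp 1).le
    calc p N - p 1 ≤ p N := by linarith
      _ ≤ max (p 1) (p N) := le_max_right _ _
  · have h0 : ∀ m ∈ Finset.Icc 2 N, |p (m-1) - p m| = p (m-1) - p m := by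
      intro m hm'
      rw [abs_of_nonneg (by simp only [sub_nonneg]; exact hm (by omega))]
    rw [Finset.sum_congr rfl h0, hre (fun m => p (m-1) - p m)]
    have h1 : ∑ i ∈ Finset.range (N-1), (fun m => p (m-1) - p m) (2 + i) =
        ∑ i ∈ Finset.range (N-1), ((fun j => -p (j+1)) (i+1) - (fun j => -p (j+1)) i) := by
      apply Finset.sum_congr rfl; intro i _
      simp only
      rw [show 2 + i = i + 1 + 1 by omega, show i + 1 + 1 - 1 = i + 1 by omega]
      ring
    rw [h1, Finset.sum_range_sub (fun j => -p (j+1)) (N-1)]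
    simp only [show N - 1 + 1 = N from by omega, Nat.zero_add]
    have := (hp N).le
    calc -p N - -p 1 ≤ p 1 := by linarith
      _ ≤ max (p 1) (p N) := le_max_left _ _

lemma shift1_bound {p : ℕ → ℝ} (hp : ∀ n, 0 < p n) (hmono : Monotone p ∨ Antitone p)
    (g : ℕ → ℂ) (hg : ∀ n, Complex.abs (g n) ≤ 1) (N : ℕ) (hN : 1 ≤ N) :
    Complex.abs ((∑ n ∈ Finset.Icc 1 N, (p n : ℂ) * g (n + 1)) -
      ∑ n ∈ Finset.Icc 1 N, (p n : ℂ) * g n) ≤ 3 * max (p 1) (p N) := by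
  have hidx : (∑ n ∈ Finset.Icc 1 N, (p n : ℂ) * g (n + 1)) =
      ∑ m ∈ Finset.Icc 2 (N + 1), (p (m - 1) : ℂ) * g m := by
    rw [show Finset.Icc 2 (N+1) = Finset.map (addRightEmbedding 1) (Finset.Icc 1 N) by
      rw [Finset.map_add_right_Icc], Finset.sum_map]
    apply Finset.sum_congr rfl
    intro n _
    simp [addRightEmbedding]
  have hsplit1 : ∑ m ∈ Finset.Icc 2 (N + 1), (p (m - 1) : ℂ) * g m =
      (∑ m ∈ Finset.Icc 2 N, (p (m - 1) : ℂ) * g m) + (p N : ℂ) * g (N + 1) := by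
    rw [Finset.sum_Icc_succ_top (by omega)]
    norm_num
  have hsplit2 : ∑ n ∈ Finset.Icc 1 N, (p n : ℂ) * g n =
      (p 1 : ℂ) * g 1 + ∑ m ∈ Finset.Icc 2 N, (p m : ℂ) * g m := by
    have : Finset.Icc 1 N = insert 1 (Finset.Icc 2 N) := by
      ext x; simp [Finset.mem_Icc, Finset.mem_insert]; omega
    rw [this, Finset.sum_insert (by simp)]
  rw [hidx, hsplit1, hsplit2]
  have key : (∑ m ∈ Finset.Icc 2 N, (p (m-1) : ℂ) * g m) + (p N : ℂ) * g (N+1) -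
      ((p 1 : ℂ) * g 1 + ∑ m ∈ Finset.Icc 2 N, (p m : ℂ) * g m) =
      (∑ m ∈ Finset.Icc 2 N, ((p (m-1) : ℂ) - (p m : ℂ)) * g m) +
        (p N : ℂ) * g (N+1) - (p 1 : ℂ) * g 1 := by
    have hd : ∀ m ∈ Finset.Icc 2 N, ((p (m-1) : ℂ) - (p m : ℂ)) * g m =
        (p (m-1) : ℂ) * g m - (p m : ℂ) * g m := fun m _ => sub_mul _ _ _
    rw [Finset.sum_congr rfl hd, Finset.sum_sub_distrib]
    ring
  rw [key]
  have b1 : Complex.abs (∑ m ∈ Finset.Icc 2 N, ((p (m-1) : ℂ) - (p m : ℂ)) * g m) ≤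
      max (p 1) (p N) := by
    calc Complex.abs (∑ m ∈ Finset.Icc 2 N, ((p (m-1) : ℂ) - (p m : ℂ)) * g m)
        ≤ ∑ m ∈ Finset.Icc 2 N, Complex.abs (((p (m-1) : ℂ) - (p m : ℂ)) * g m) :=
          AbsoluteValue.sum_le _ _ _
      _ ≤ ∑ m ∈ Finset.Icc 2 N, |p (m-1) - p m| := by
          apply Finset.sum_le_sum; intro m _
          rw [map_mul]
          have : ((p (m-1) : ℂ) - (p m : ℂ)) = ((p (m-1) - p m : ℝ) : ℂ) := by push_cast; ring
          rw [this, Complex.abs_ofReal]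
          nlinarith [hg m, Complex.abs.nonneg (g m), abs_nonneg (p (m-1) - p m)]
      _ ≤ max (p 1) (p N) := tele_bound hp hmono N hN
  have b2 : Complex.abs ((p N : ℂ) * g (N+1)) ≤ max (p 1) (p N) := by
    rw [map_mul, Complex.abs_ofReal, abs_of_pos (hp N)]
    nlinarith [hg (N+1), Complex.abs.nonneg (g (N+1)), (hp N), le_max_right (p 1) (p N)]
  have b3 : Complex.abs ((p 1 : ℂ) * g 1) ≤ max (p 1) (p N) := by
    rw [map_mul, Complex.abs_ofReal, abs_of_pos (hp 1)]
    nlinarith [hg 1, Complex.abs.nonneg (g 1), (hp 1), le_max_left (p 1) (p N)]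
  calc Complex.abs (∑ m ∈ Finset.Icc 2 N, ((p (m-1) : ℂ) - (p m : ℂ)) * g m +
        (p N : ℂ) * g (N+1) - (p 1 : ℂ) * g 1)
      ≤ Complex.abs (∑ m ∈ Finset.Icc 2 N, ((p (m-1) : ℂ) - (p m : ℂ)) * g m +
        (p N : ℂ) * g (N+1)) + Complex.abs ((p 1 : ℂ) * g 1) :=
        Complex.abs.sub_le_add _ _
    _ ≤ Complex.abs (∑ m ∈ Finset.Icc 2 N, ((p (m-1) : ℂ) - (p m : ℂ)) * g m) +
        Complex.abs ((p N : ℂ) * g (N+1)) + Complex.abs ((p 1 : ℂ) * g 1) := by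
        have := Complex.abs.add_le (∑ m ∈ Finset.Icc 2 N, ((p (m-1) : ℂ) - (p m : ℂ)) * g m)
          ((p N : ℂ) * g (N+1))
        linarith
    _ ≤ 3 * max (p 1) (p N) := by linarith

lemma qtend {p : ℕ → ℝ} (hp : ∀ n, 0 < p n)
    (hPtop : Tendsto (fun N => PP p N) atTop atTop)
    (hratio : Tendsto (fun N => p N / PP p N) atTop (nhds 0)) :
    Tendsto (fun N => 3 * max (p 1) (p N) / PP p N) atTop (nhds 0) := by
  have h1 : Tendsto (fun N => p 1 / PP p N) atTop (nhds 0) :=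
    Tendsto.div_atTop tendsto_const_nhds hPtop
  have h2 : Tendsto (fun N => max (p 1 / PP p N) (p N / PP p N)) atTop (nhds 0) := by
    have := h1.max hratio
    simpa using this
  have h3 : Tendsto (fun N => max (p 1) (p N) / PP p N) atTop (nhds 0) := by
    apply h2.congr
    intro N
    exact max_div_div_right (Finset.sum_nonneg fun i _ => (hp i).le) _ _
  have := h3.const_mul (3 : ℝ)
  simpa [mul_div_assoc] using this

lemma shift1_tendsto {p : ℕ → ℝ} (hp : ∀ n, 0 < p n) (hmono : Monotone p ∨ Antitone p)
    (hPtop : Tendsto (fun N => PP p N) atTop atTop)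
    (hratio : Tendsto (fun N => p N / PP p N) atTop (nhds 0))
    (g : ℕ → ℂ) (hg : ∀ n, Complex.abs (g n) ≤ 1) :
    Tendsto (fun N => Avg p (fun n => g (n + 1)) N - Avg p g N) atTop (nhds 0) := by
  apply squeeze_zero_norm' (a := fun N => 3 * max (p 1) (p N) / PP p N)
  · filter_upwards [eventually_ge_atTop 1] with N hN
    have hP := PP_pos hp hN
    have heq : Avg p (fun n => g (n + 1)) N - Avg p g N =
        (1 / (PP p N : ℂ)) * ((∑ n ∈ Finset.Icc 1 N, (p n : ℂ) * g (n + 1)) -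
          ∑ n ∈ Finset.Icc 1 N, (p n : ℂ) * g n) := by
      rw [Avg, Avg, mul_sub]
    rw [heq]
    rw [show ∀ z w : ℂ, ‖z * w‖ = Complex.abs z * Complex.abs w from fun z w => by
      rw [Complex.norm_eq_abs, map_mul]]
    have habs : Complex.abs (1 / (PP p N : ℂ)) = 1 / PP p N := by
      rw [map_div₀, map_one, Complex.abs_ofReal, abs_of_pos hP]
    rw [habs, div_mul_eq_mul_div, one_mul, div_le_div_iff_of_pos_right hP]
    exact shift1_bound hp hmono g hg N hN
  · exact qtend hp hPtop hratio

lemma shift_tendsto {p : ℕ → ℝ} (hp : ∀ n, 0 < p n) (hmono : Monotone p ∨ Antitone p)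
    (hPtop : Tendsto (fun N => PP p N) atTop atTop)
    (hratio : Tendsto (fun N => p N / PP p N) atTop (nhds 0)) (h : ℕ) :
    ∀ g : ℕ → ℂ, (∀ n, Complex.abs (g n) ≤ 1) →
    Tendsto (fun N => Avg p (fun n => g (n + h)) N - Avg p g N) atTop (nhds 0) := by
  induction h with
  | zero => intro g hg; simpa using tendsto_const_nhds
  | succ h ih =>
    intro g hg
    have t1 := ih (fun n => g (n + 1)) (fun n => hg (n + 1))
    have t2 := shift1_tendsto hp hmono hPtop hratio g hg
    have t3 := t1.add t2
    rw [add_zero] at t3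
    apply t3.congr
    intro N
    have he : (fun n => (fun n => g (n + 1)) (n + h)) = (fun n => g (n + (h + 1))) := by
      rfl
    rw [he]
    ring

lemma avg_shift_lim {p : ℕ → ℝ} (hp : ∀ n, 0 < p n) (hmono : Monotone p ∨ Antitone p)
    (hPtop : Tendsto (fun N => PP p N) atTop atTop)
    (hratio : Tendsto (fun N => p N / PP p N) atTop (nhds 0)) (a : ℕ)
    (g : ℕ → ℂ) (hg : ∀ n, Complex.abs (g n) ≤ 1) {L : ℂ}
    (hL : Tendsto (fun N => Avg p g N) atTop (nhds L)) :
    Tendsto (fun N => Avg p (fun n => g (n + a)) N) atTop (nhds L) := by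
  have := (shift_tendsto hp hmono hPtop hratio a g hg).add hL
  rw [zero_add] at this
  apply this.congr
  intro N; ring

lemma cauchy_schwarz_avg {p : ℕ → ℝ} (hp : ∀ n, 0 < p n) (c : ℕ → ℂ) {N : ℕ} (hN : 1 ≤ N) :
    (Complex.abs (Avg p c N))^2 ≤
      Complex.abs (Avg p (fun n => c n * (starRingEnd ℂ) (c n)) N) := by
  have hP := PP_pos hp hN
  set s := Finset.Icc 1 N
  have hA : Complex.abs (Avg p c N) ≤ (1 / PP p N) * ∑ n ∈ s, p n * Complex.abs (c n) := by
    rw [Avg, map_mul, map_div₀, map_one, Complex.abs_ofReal, abs_of_pos hP]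
    gcongr
    calc Complex.abs (∑ n ∈ s, (p n : ℂ) * c n) ≤ ∑ n ∈ s, Complex.abs ((p n : ℂ) * c n) :=
        AbsoluteValue.sum_le _ _ _
      _ = ∑ n ∈ s, p n * Complex.abs (c n) := by
        apply Finset.sum_congr rfl; intro n _
        rw [map_mul, Complex.abs_ofReal, abs_of_pos (hp n)]
  have hB : (∑ n ∈ s, p n * Complex.abs (c n))^2 ≤
      (PP p N) * ∑ n ∈ s, p n * (Complex.abs (c n))^2 := by
    have hcs := Finset.sum_mul_sq_le_sq_mul_sq s (fun n => Real.sqrt (p n))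
      (fun n => Real.sqrt (p n) * Complex.abs (c n))
    have h1 : ∀ n ∈ s, Real.sqrt (p n) * (Real.sqrt (p n) * Complex.abs (c n)) =
        p n * Complex.abs (c n) := by
      intro n _
      rw [← mul_assoc, Real.mul_self_sqrt (hp n).le]
    have h2 : ∀ n ∈ s, Real.sqrt (p n) ^ 2 = p n := fun n _ => Real.sq_sqrt (hp n).le
    have h3 : ∀ n ∈ s, (Real.sqrt (p n) * Complex.abs (c n))^2 =
        p n * (Complex.abs (c n))^2 := by
      intro n _
      rw [mul_pow, Real.sq_sqrt (hp n).le]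
    rw [Finset.sum_congr rfl h1, Finset.sum_congr rfl h2, Finset.sum_congr rfl h3] at hcs
    exact hcs
  have hC : Avg p (fun n => c n * (starRingEnd ℂ) (c n)) N =
      (((1 / PP p N) * ∑ n ∈ s, p n * (Complex.abs (c n))^2 : ℝ) : ℂ) := by
    rw [Avg]
    push_cast
    congr 1
    apply Finset.sum_congr rfl
    intro n _
    rw [Complex.mul_conj, ← Complex.sq_abs]
    push_cast
    ring
  rw [hC, Complex.abs_ofReal]
  have hX : 0 ≤ (1 / PP p N) * ∑ n ∈ s, p n * (Complex.abs (c n))^2 := by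
    apply mul_nonneg (div_nonneg zero_le_one hP.le)
    apply Finset.sum_nonneg
    intro n _; exact mul_nonneg (hp n).le (sq_nonneg _)
  rw [abs_of_nonneg hX]
  calc (Complex.abs (Avg p c N))^2 ≤ ((1 / PP p N) * ∑ n ∈ s, p n * Complex.abs (c n))^2 := by
        apply pow_le_pow_left₀ (Complex.abs.nonneg _) hA
    _ = (1 / PP p N)^2 * (∑ n ∈ s, p n * Complex.abs (c n))^2 := by ring
    _ ≤ (1 / PP p N)^2 * ((PP p N) * ∑ n ∈ s, p n * (Complex.abs (c n))^2) := by
        apply mul_le_mul_of_nonneg_left hB (by positivity)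
    _ = (1 / PP p N) * ∑ n ∈ s, p n * (Complex.abs (c n))^2 := by
        field_simp

set_option maxHeartbeats 1000000 in
/-- **Theorem A.2** (a weighted van der Corput lemma). -/
theorem weighted_vdC (p : ℕ → ℝ) (hp : ∀ n, 0 < p n)
    (hmono : Monotone p ∨ Antitone p)
    (hPtop : Tendsto (fun N => ∑ n ∈ Finset.Icc 1 N, p n) atTop atTop)
    (hratio : Tendsto (fun N => p N / ∑ n ∈ Finset.Icc 1 N, p n) atTop (nhds 0)) :
    ∀ ε > (0 : ℝ), ∃ δ > (0 : ℝ), ∀ f : ℕ → ℂ, (∀ n, ‖f n‖ ≤ 1) →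
      ∀ A : ℕ → ℂ,
        (∀ h : ℕ, 1 ≤ h →
          Tendsto (fun N => (1 / ((∑ n ∈ Finset.Icc 1 N, p n : ℝ) : ℂ)) *
            ∑ n ∈ Finset.Icc 1 N, (p n : ℂ) * f (n + h) * (starRingEnd ℂ) (f n))
            atTop (nhds (A h))) →
        (limsup (fun H : ℕ =>
            ‖(1 / (H : ℂ)) * ∑ h ∈ Finset.Icc 1 H, A h‖) atTop ≤ δ →
          limsup (fun N : ℕ =>
            ‖(1 / ((∑ n ∈ Finset.Icc 1 N, p n : ℝ) : ℂ)) *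
              ∑ n ∈ Finset.Icc 1 N, (p n : ℂ) * f n‖) atTop ≤ ε) := by
  intro ε hε
  refine ⟨min (ε^2/8) (ε/20), by positivity, ?_⟩
  set δ := min (ε^2/8) (ε/20) with hδdef
  have hδpos : 0 < δ := by positivity
  have hδ1 : δ ≤ ε^2/8 := min_le_left _ _
  have hδ2 : δ ≤ ε/20 := min_le_right _ _
  intro f hf A hA hls
  have hPtop' : Tendsto (fun N => PP p N) atTop atTop := hPtop
  have hratio' : Tendsto (fun N => p N / PP p N) atTop (nhds 0) := hratio
  -- hypothesis in Avg form
  have hA' : ∀ h, 1 ≤ h →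
      Tendsto (fun N => Avg p (fun n => f (n + h) * (starRingEnd ℂ) (f n)) N)
        atTop (nhds (A h)) := by
    intro h hh
    apply (hA h hh).congr
    intro N
    unfold Avg PP
    congr 1
    apply Finset.sum_congr rfl
    intro n _
    ring
  have hbd2 : ∀ (a b : ℂ), Complex.abs a ≤ 1 → Complex.abs b ≤ 1 →
      Complex.abs (a * (starRingEnd ℂ) b) ≤ 1 := by
    intro a b ha hb
    rw [map_mul, Complex.abs_conj]
    exact mul_le_one₀ ha (Complex.abs.nonneg _) hb
  have habsA : ∀ h, 1 ≤ h → Complex.abs (A h) ≤ 1 := by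
    intro h hh
    have hle : ∀ᶠ N in atTop,
        ‖Avg p (fun n => f (n + h) * (starRingEnd ℂ) (f n)) N‖ ≤ 1 := by
      filter_upwards [eventually_ge_atTop 1] with N hN
      rw [Complex.norm_eq_abs]
      exact Avg_abs_le hp _ (fun n => hbd2 _ _ (hf _) (hf _)) hN
    have := le_of_tendsto (hA' h hh).norm hle
    rwa [Complex.norm_eq_abs] at this
  -- partial sums of A
  set SA : ℕ → ℂ := fun k => ∑ d ∈ Finset.Icc 1 k, A d with hSAdef
  have hSAk : ∀ k : ℕ, Complex.abs (SA k) ≤ (k : ℝ) := by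
    intro k
    calc Complex.abs (SA k) ≤ ∑ d ∈ Finset.Icc 1 k, Complex.abs (A d) :=
        AbsoluteValue.sum_le _ _ _
      _ ≤ ∑ _d ∈ Finset.Icc 1 k, (1:ℝ) :=
        Finset.sum_le_sum (fun d hd => habsA d (Finset.mem_Icc.1 hd).1)
      _ = (k : ℝ) := by simp [Nat.card_Icc]
  have hbdd : IsBoundedUnder (· ≤ ·) atTop
      (fun H : ℕ => Complex.abs ((1 / (H : ℂ)) * ∑ h ∈ Finset.Icc 1 H, A h)) := by
    apply isBoundedUnder_of_eventually_le (a := (1:ℝ))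
    filter_upwards [eventually_ge_atTop 1] with H hH
    have hHpos : (0:ℝ) < H := by exact_mod_cast hH
    rw [map_mul, map_div₀, map_one, Complex.abs_natCast, div_mul_eq_mul_div, one_mul,
      div_le_one hHpos]
    exact hSAk H
  have hlt : ∀ᶠ (H : ℕ) in atTop,
      Complex.abs ((1 / (H : ℂ)) * ∑ h ∈ Finset.Icc 1 H, A h) < 2*δ :=
    eventually_lt_of_limsup_lt (lt_of_le_of_lt hls (by linarith)) hbdd
  obtain ⟨K0, hK0⟩ := eventually_atTop.1 hlt
  set K1 : ℕ := max K0 1 with hK1def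
  have hSA2 : ∀ k : ℕ, K1 ≤ k → Complex.abs (SA k) ≤ 2*δ*(k:ℝ) := by
    intro k hk
    have h1k : 1 ≤ k := le_trans (le_max_right _ _) hk
    have hk0 := hK0 k (le_trans (le_max_left _ _) hk)
    have hkpos : (0:ℝ) < k := by exact_mod_cast h1k
    rw [map_mul, map_div₀, map_one, Complex.abs_natCast, div_mul_eq_mul_div, one_mul,
      div_lt_iff₀ hkpos] at hk0
    exact le_of_lt hk0
  -- choice of H
  obtain ⟨H, hHge⟩ := exists_nat_ge (max (1/δ) (2*(K1:ℝ)/δ) + 1)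
  have hmaxnn : (0:ℝ) ≤ max (1/δ) (2*(K1:ℝ)/δ) :=
    le_trans (by positivity) (le_max_left _ _)
  have hH1 : 1 ≤ H := by
    have h1 : (1:ℝ) ≤ H := by linarith
    exact_mod_cast h1
  have hHpos : (0:ℝ) < H := by exact_mod_cast hH1
  have hHδ : 1/(H:ℝ) ≤ δ := by
    have h1 : 1/δ ≤ (H:ℝ) := le_trans (le_max_left _ _) (by linarith)
    rw [div_le_iff₀ hHpos]
    rw [div_le_iff₀ hδpos] at h1
    nlinarith
  have hHK : 2*(K1:ℝ)/(H:ℝ) ≤ δ := by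
    have h1 : 2*(K1:ℝ)/δ ≤ (H:ℝ) := le_trans (le_max_right _ _) (by linarith)
    rw [div_le_iff₀ hδpos] at h1
    rw [div_le_iff₀ hHpos]
    nlinarith
  set s : Finset ℕ := Finset.Icc 1 H with hsdef
  have hcards : (s.card : ℝ) = (H:ℝ) := by
    simp [hsdef, Nat.card_Icc]
  set c : ℕ → ℂ := fun n => (1/(H:ℂ)) * ∑ h ∈ s, f (n + h) with hcdef
  set BB : ℕ × ℕ → ℕ → ℂ :=
    fun pr N => Avg p (fun n => f (n + pr.1) * (starRingEnd ℂ) (f (n + pr.2))) N with hBBdef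
  have habsH : Complex.abs ((1/(H:ℂ))^2) = (1/(H:ℝ))^2 := by
    rw [map_pow, map_div₀, map_one, Complex.abs_natCast]
  -- expansion of the square
  have hW : ∀ N, Avg p (fun n => c n * (starRingEnd ℂ) (c n)) N
      = (1/(H:ℂ))^2 * ∑ pr ∈ s ×ˢ s, BB pr N := by
    intro N
    have hcc : (fun n => c n * (starRingEnd ℂ) (c n)) =
        (fun n => (1/(H:ℂ))^2 * ∑ pr ∈ s ×ˢ s,
          f (n + pr.1) * (starRingEnd ℂ) (f (n + pr.2))) := by
      funext n
      have hconj : (starRingEnd ℂ) (c n) =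
          (1/(H:ℂ)) * ∑ h' ∈ s, (starRingEnd ℂ) (f (n + h')) := by
        rw [hcdef]
        simp only [map_mul, map_sum, map_div₀, map_one, Complex.conj_natCast]
      rw [hconj, hcdef]
      simp only
      rw [Finset.sum_product' s s (fun h h' => f (n + h) * (starRingEnd ℂ) (f (n + h'))),
        ← Finset.sum_mul_sum]
      ring
    rw [hcc, Avg_const_mul, Avg_sum]
  -- diagonal bound
  have hdiag : ∀ N, 1 ≤ N →
      Complex.abs ((1/(H:ℂ))^2 * ∑ pr ∈ s.diag, BB pr N) ≤ 1/(H:ℝ) := by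
    intro N hN
    rw [map_mul, habsH]
    have hd : Complex.abs (∑ pr ∈ s.diag, BB pr N) ≤ (H:ℝ) := by
      calc Complex.abs (∑ pr ∈ s.diag, BB pr N)
          ≤ ∑ pr ∈ s.diag, Complex.abs (BB pr N) := AbsoluteValue.sum_le _ _ _
        _ ≤ ∑ _pr ∈ s.diag, (1:ℝ) := Finset.sum_le_sum
            (fun pr _ => Avg_abs_le hp _ (fun n => hbd2 _ _ (hf _) (hf _)) hN)
        _ = (H:ℝ) := by
            rw [Finset.sum_const, nsmul_eq_mul, mul_one, Finset.diag_card, hcards]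
    calc (1/(H:ℝ))^2 * Complex.abs (∑ pr ∈ s.diag, BB pr N) ≤ (1/(H:ℝ))^2 * (H:ℝ) := by
          apply mul_le_mul_of_nonneg_left hd (by positivity)
      _ = 1/(H:ℝ) := by field_simp
  -- off-diagonal limits
  set Alim : ℕ × ℕ → ℂ := fun pr => if pr.2 < pr.1 then A (pr.1 - pr.2)
    else (starRingEnd ℂ) (A (pr.2 - pr.1)) with hAlimdef
  have hBBlim : ∀ pr ∈ s.offDiag, Tendsto (BB pr) atTop (nhds (Alim pr)) := by
    intro pr hpr
    rw [Finset.mem_offDiag] at hpr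
    obtain ⟨hm1, hm2, hne⟩ := hpr
    rcases hne.lt_or_gt with hlt | hlt
    · -- pr.1 < pr.2 : conjugate case
      have hd1 : 1 ≤ pr.2 - pr.1 := by omega
      have hbase := hA' (pr.2 - pr.1) hd1
      have hshift := avg_shift_lim hp hmono hPtop' hratio' pr.1 _
        (fun n => hbd2 _ _ (hf _) (hf _)) hbase
      have hkey : (fun n => (fun m => f (m + (pr.2 - pr.1)) * (starRingEnd ℂ) (f m)) (n + pr.1)) =
          (fun n => f (n + pr.2) * (starRingEnd ℂ) (f (n + pr.1))) := by
        funext n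
        simp only
        rw [show n + pr.1 + (pr.2 - pr.1) = n + pr.2 by omega]
      rw [hkey] at hshift
      have hstar := hshift.star
      have hconj : ∀ N, BB pr N =
          star (Avg p (fun n => f (n + pr.2) * (starRingEnd ℂ) (f (n + pr.1))) N) := by
        intro N
        rw [hBBdef]
        simp only
        unfold Avg
        rw [← starRingEnd_apply, map_mul, map_sum, map_div₀, map_one, Complex.conj_ofReal]
        congr 1
        apply Finset.sum_congr rfl
        intro n _
        simp only [map_mul, Complex.conj_conj, Complex.conj_ofReal]
        ring
      have hAl : Alim pr = star (A (pr.2 - pr.1)) := by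
        rw [hAlimdef]
        simp only
        rw [if_neg (by omega), starRingEnd_apply]
      rw [hAl]
      exact hstar.congr (fun N => (hconj N).symm)
    · -- pr.2 < pr.1
      have hd1 : 1 ≤ pr.1 - pr.2 := by omega
      have hbase := hA' (pr.1 - pr.2) hd1
      have hshift := avg_shift_lim hp hmono hPtop' hratio' pr.2 _
        (fun n => hbd2 _ _ (hf _) (hf _)) hbase
      have hkey : (fun n => (fun m => f (m + (pr.1 - pr.2)) * (starRingEnd ℂ) (f m)) (n + pr.2)) =
          (fun n => f (n + pr.1) * (starRingEnd ℂ) (f (n + pr.2))) := by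
        funext n
        simp only
        rw [show n + pr.2 + (pr.1 - pr.2) = n + pr.1 by omega]
      rw [hkey] at hshift
      have hAl : Alim pr = A (pr.1 - pr.2) := by
        rw [hAlimdef]; simp only; rw [if_pos hlt]
      rw [hAl]
      exact hshift
  have hoffT : Tendsto (fun N => (1/(H:ℂ))^2 * ∑ pr ∈ s.offDiag, BB pr N) atTop
      (nhds ((1/(H:ℂ))^2 * ∑ pr ∈ s.offDiag, Alim pr)) :=
    Tendsto.const_mul _ (tendsto_finset_sum _ hBBlim)
  -- bound on the limit
  set G : ℂ := ∑ pr ∈ (s ×ˢ s).filter (fun pr => pr.2 < pr.1), A (pr.1 - pr.2) with hGdef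
  have hsplitOD : ∑ pr ∈ s.offDiag, Alim pr = G + (starRingEnd ℂ) G := by
    have hunion : s.offDiag = ((s ×ˢ s).filter (fun pr => pr.2 < pr.1)) ∪
        ((s ×ˢ s).filter (fun pr => pr.1 < pr.2)) := by
      ext pr
      simp only [Finset.mem_offDiag, Finset.mem_union, Finset.mem_filter, Finset.mem_product]
      constructor
      · rintro ⟨ha, hb, hc⟩
        by_cases hx : pr.2 < pr.1
        · exact Or.inl ⟨⟨ha, hb⟩, hx⟩
        · exact Or.inr ⟨⟨ha, hb⟩, by omega⟩
      · rintro (⟨⟨ha, hb⟩, hx⟩ | ⟨⟨ha, hb⟩, hx⟩) <;> exact ⟨ha, hb, by omega⟩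
    have hdisj : Disjoint ((s ×ˢ s).filter (fun pr => pr.2 < pr.1))
        ((s ×ˢ s).filter (fun pr => pr.1 < pr.2)) := by
      apply Finset.disjoint_left.2
      intro pr h1 h2
      rw [Finset.mem_filter] at h1 h2
      omega
    rw [hunion, Finset.sum_union hdisj]
    congr 1
    · apply Finset.sum_congr rfl
      intro pr hpr
      rw [Finset.mem_filter] at hpr
      rw [hAlimdef]
      simp only
      rw [if_pos hpr.2]
    · rw [hGdef, map_sum]
      apply Finset.sum_nbij' (i := fun pr => pr.swap) (j := fun pr => pr.swap)
      · intro a ha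
        rw [Finset.mem_filter] at ha ⊢
        simp only [Finset.mem_product] at ha ⊢
        exact ⟨⟨ha.1.2, ha.1.1⟩, ha.2⟩
      · intro a ha
        rw [Finset.mem_filter] at ha ⊢
        simp only [Finset.mem_product] at ha ⊢
        exact ⟨⟨ha.1.2, ha.1.1⟩, ha.2⟩
      · intro a _; simp
      · intro a _; simp
      · intro a ha
        rw [Finset.mem_filter] at ha
        rw [hAlimdef]
        simp only [Prod.fst_swap, Prod.snd_swap]
        rw [if_neg (by omega)]
  have hG : G = ∑ h ∈ s, SA (h - 1) := by
    rw [hGdef, Finset.sum_filter,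
      Finset.sum_product' s s (fun a b => if b < a then A (a - b) else 0)]
    apply Finset.sum_congr rfl
    intro h hh
    rw [hsdef] at hh
    rw [Finset.mem_Icc] at hh
    rw [← Finset.sum_filter]
    have hfil : (s.filter (fun h' => h' < h)) = Finset.Icc 1 (h - 1) := by
      ext x
      rw [hsdef]
      simp only [Finset.mem_filter, Finset.mem_Icc]
      omega
    rw [hfil, hSAdef]
    apply Finset.sum_nbij' (i := fun h' => h - h') (j := fun d => h - d)
    · intro a ha; rw [Finset.mem_Icc] at ha ⊢; omega
    · intro a ha; rw [Finset.mem_Icc] at ha ⊢; omega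
    · intro a ha; rw [Finset.mem_Icc] at ha; omega
    · intro a ha; rw [Finset.mem_Icc] at ha; omega
    · intro a _; rfl
  have hGbd : Complex.abs G ≤ (H:ℝ) * ((K1:ℝ) + 2*δ*(H:ℝ)) := by
    rw [hG]
    calc Complex.abs (∑ h ∈ s, SA (h-1))
        ≤ ∑ h ∈ s, Complex.abs (SA (h-1)) := AbsoluteValue.sum_le _ _ _
      _ ≤ ∑ _h ∈ s, ((K1:ℝ) + 2*δ*(H:ℝ)) := by
          apply Finset.sum_le_sum
          intro h hh
          rw [hsdef, Finset.mem_Icc] at hh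
          rcases le_or_gt K1 (h-1) with hk | hk
          · have hb := hSA2 (h-1) hk
            have hcast : ((h-1:ℕ):ℝ) ≤ (H:ℝ) := by exact_mod_cast (by omega : h - 1 ≤ H)
            have hK1c : (0:ℝ) ≤ (K1:ℝ) := Nat.cast_nonneg _
            nlinarith
          · have hb := hSAk (h-1)
            have hcast : ((h-1:ℕ):ℝ) ≤ (K1:ℝ) := by exact_mod_cast hk.le
            nlinarith
      _ = (H:ℝ) * ((K1:ℝ) + 2*δ*(H:ℝ)) := by
          rw [Finset.sum_const, nsmul_eq_mul, hcards]
  have hLbd : Complex.abs ((1/(H:ℂ))^2 * ∑ pr ∈ s.offDiag, Alim pr) ≤ 5*δ := by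
    rw [map_mul, habsH, hsplitOD]
    have habs2 : Complex.abs (G + (starRingEnd ℂ) G) ≤ 2 * Complex.abs G := by
      calc Complex.abs (G + (starRingEnd ℂ) G)
          ≤ Complex.abs G + Complex.abs ((starRingEnd ℂ) G) := Complex.abs.add_le _ _
        _ = 2 * Complex.abs G := by rw [Complex.abs_conj]; ring
    have hcalc : (1/(H:ℝ))^2 * (2 * ((H:ℝ) * ((K1:ℝ) + 2*δ*(H:ℝ)))) =
        2*(K1:ℝ)/(H:ℝ) + 4*δ := by
      field_simp
      ring
    calc (1/(H:ℝ))^2 * Complex.abs (G + (starRingEnd ℂ) G)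
        ≤ (1/(H:ℝ))^2 * (2 * ((H:ℝ) * ((K1:ℝ) + 2*δ*(H:ℝ)))) := by
          apply mul_le_mul_of_nonneg_left _ (by positivity)
          calc Complex.abs (G + (starRingEnd ℂ) G) ≤ 2 * Complex.abs G := habs2
            _ ≤ 2 * ((H:ℝ) * ((K1:ℝ) + 2*δ*(H:ℝ))) := by linarith
      _ = 2*(K1:ℝ)/(H:ℝ) + 4*δ := hcalc
      _ ≤ 5*δ := by linarith
  -- S - T tends to 0
  have hTsum : ∀ N, Avg p c N = (1/(H:ℂ)) * ∑ h ∈ s, Avg p (fun n => f (n + h)) N := by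
    intro N
    rw [show Avg p c N = Avg p (fun n => (1/(H:ℂ)) * ∑ h ∈ s, (fun h n => f (n + h)) h n) N
      from rfl]
    rw [Avg_const_mul, Avg_sum]
  have hT0 : Tendsto (fun N => Avg p f N - Avg p c N) atTop (nhds 0) := by
    have heach : ∀ h ∈ s, Tendsto (fun N => Avg p f N - Avg p (fun n => f (n + h)) N)
        atTop (nhds 0) := by
      intro h _
      have ht := (shift_tendsto hp hmono hPtop' hratio' h f hf).neg
      rw [neg_zero] at ht
      apply ht.congr
      intro N; ring
    have hsum := tendsto_finset_sum s heach
    rw [Finset.sum_const_zero] at hsum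
    have hmul := hsum.const_mul (1/(H:ℂ))
    rw [mul_zero] at hmul
    apply hmul.congr
    intro N
    rw [Finset.sum_sub_distrib, Finset.sum_const, hTsum N]
    have hHC : (s.card : ℂ) = (H:ℂ) := by
      rw [hsdef]; simp [Nat.card_Icc]
    rw [nsmul_eq_mul, hHC]
    have hHne : (H:ℂ) ≠ 0 := by
      simp only [ne_eq, Nat.cast_eq_zero]
      omega
    field_simp
  -- eventual bound
  have hev : ∀ᶠ N in atTop, Complex.abs (Avg p f N) ≤ ε := by
    have h0 := hoffT.sub (tendsto_const_nhds
      (x := (1/(H:ℂ))^2 * ∑ pr ∈ s.offDiag, Alim pr))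
    rw [sub_self] at h0
    have h0n := h0.norm
    rw [norm_zero] at h0n
    have hev2 := h0n.eventually_lt_const hδpos
    have hT0n := hT0.norm
    rw [norm_zero] at hT0n
    have hev3 := hT0n.eventually_lt_const hδpos
    filter_upwards [eventually_ge_atTop 1, hev2, hev3] with N hN1 hN2 hN3
    have hcs := cauchy_schwarz_avg hp c (hN := hN1)
    rw [hW N] at hcs
    have hsplit : ∑ pr ∈ s ×ˢ s, BB pr N =
        (∑ pr ∈ s.diag, BB pr N) + ∑ pr ∈ s.offDiag, BB pr N := by
      rw [← Finset.diag_union_offDiag s, Finset.sum_union (Finset.disjoint_diag_offDiag s)]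
    rw [hsplit, mul_add] at hcs
    have hoffbd : Complex.abs ((1/(H:ℂ))^2 * ∑ pr ∈ s.offDiag, BB pr N) ≤ 6*δ := by
      have htri : Complex.abs ((1/(H:ℂ))^2 * ∑ pr ∈ s.offDiag, BB pr N) ≤
          Complex.abs ((1/(H:ℂ))^2 * ∑ pr ∈ s.offDiag, BB pr N -
            (1/(H:ℂ))^2 * ∑ pr ∈ s.offDiag, Alim pr) +
          Complex.abs ((1/(H:ℂ))^2 * ∑ pr ∈ s.offDiag, Alim pr) := by
        calc Complex.abs ((1/(H:ℂ))^2 * ∑ pr ∈ s.offDiag, BB pr N) =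
            Complex.abs (((1/(H:ℂ))^2 * ∑ pr ∈ s.offDiag, BB pr N -
              (1/(H:ℂ))^2 * ∑ pr ∈ s.offDiag, Alim pr) +
              (1/(H:ℂ))^2 * ∑ pr ∈ s.offDiag, Alim pr) := by rw [sub_add_cancel]
          _ ≤ _ := Complex.abs.add_le _ _
      rw [Complex.norm_eq_abs] at hN2
      linarith
    have hWbd : Complex.abs ((1/(H:ℂ))^2 * (∑ pr ∈ s.diag, BB pr N) +
        (1/(H:ℂ))^2 * ∑ pr ∈ s.offDiag, BB pr N) ≤ 7*δ := by
      calc Complex.abs ((1/(H:ℂ))^2 * (∑ pr ∈ s.diag, BB pr N) +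
          (1/(H:ℂ))^2 * ∑ pr ∈ s.offDiag, BB pr N)
          ≤ Complex.abs ((1/(H:ℂ))^2 * (∑ pr ∈ s.diag, BB pr N)) +
            Complex.abs ((1/(H:ℂ))^2 * ∑ pr ∈ s.offDiag, BB pr N) := Complex.abs.add_le _ _
        _ ≤ 1/(H:ℝ) + 6*δ := add_le_add (hdiag N hN1) hoffbd
        _ ≤ 7*δ := by linarith
    have hT2 : (Complex.abs (Avg p c N))^2 ≤ 7*δ := le_trans hcs hWbd
    have hεδ1 : 0 ≤ ε - δ := by linarith
    have hεδ2 : 7*δ ≤ (ε-δ)^2 := by nlinarith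
    have hTle : Complex.abs (Avg p c N) ≤ ε - δ := by
      nlinarith [Complex.abs.nonneg (Avg p c N)]
    rw [Complex.norm_eq_abs] at hN3
    calc Complex.abs (Avg p f N) =
        Complex.abs ((Avg p f N - Avg p c N) + Avg p c N) := by rw [sub_add_cancel]
      _ ≤ Complex.abs (Avg p f N - Avg p c N) + Complex.abs (Avg p c N) :=
          Complex.abs.add_le _ _
      _ ≤ ε := by linarith
  -- conclude
  exact limsup_le_of_le
    (isCoboundedUnder_le_of_eventually_le atTop (x := (0:ℝ))
      (Eventually.of_forall (fun N => Complex.abs.nonneg _)))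
    hev
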